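/- Let w be a word in the alphabet {1,2} and let ŵ be a word obtained from w by deleting one letter i ∈ {1,2}. Then: (1) ε_1(ŵ) ≤ ε_1(w) + 1, and if ε_1(ŵ) = ε_1(w) + 1 then i = 1; (2) ε_1(w) ≤ ε_1(ŵ) + 1, and if ε_1(w) = ε_1(ŵ) + 1 then i = 2. -/
import Mathlib


namespace CrystalWords

/-- One step of the parenthesis-matching scan for the letters `i` (closing
parenthesis) and `i+1` (opening parenthesis).  The state `(p, q)` records the
number of unmatched closing resp. opening parentheses seen so far. -/
def bstep (i : ℕ) (pq : ℕ × ℕ) (a : ℕ) : ℕ × ℕ :=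
  if a = i then (if 0 < pq.2 then (pq.1, pq.2 - 1) else (pq.1 + 1, pq.2))
  else if a = i + 1 then (pq.1, pq.2 + 1)
  else pq

/-- `φ_i` of a word: the number `p` of unmatched letters `i` after cancellation. -/
def phiWord (i : ℕ) (w : List ℕ) : ℕ := (w.foldl (bstep i) (0, 0)).1

/-- `ε_i` of a word: the number `q` of unmatched letters `i+1` after cancellation. -/
def epsWord (i : ℕ) (w : List ℕ) : ℕ := (w.foldl (bstep i) (0, 0)).2

/-- The raising operator `e_i` on words: it changes the leftmost unmatched
letter `i+1` into an `i`, and is undefined when `ε_i = 0`. -/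
def eWord (i : ℕ) : List ℕ → Option (List ℕ)
  | [] => none
  | a :: w =>
      if a = i + 1 ∧ phiWord i w = 0 then some (i :: w)
      else (eWord i w).map (a :: ·)

/-- The lowering operator `f_i` on words: it changes the rightmost unmatched
letter `i` into an `i+1`, and is undefined when `φ_i = 0`. -/
def fWord (i : ℕ) : List ℕ → Option (List ℕ)
  | [] => none
  | a :: w =>
      if (if a = i + 1 then 1 else 0) < phiWord i w then (fWord i w).map (a :: ·)
      else if a = i then some ((i + 1) :: w) else none

/-- A word is an `A_{n-1}` highest weight vector when all `ε_j` vanish. -/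
def IsHW (n : ℕ) (w : List ℕ) : Prop := ∀ j, 1 ≤ j → j ≤ n - 1 → epsWord j w = 0


/-- The `q`-component evolution of `bstep 1` depends only on `q`. -/
def qstep (q a : ℕ) : ℕ := if a = 2 then q + 1 else if a = 1 then q - 1 else q

lemma snd_bstep (s : ℕ × ℕ) (a : ℕ) : (bstep 1 s a).2 = qstep s.2 a := by
  unfold bstep qstep
  split_ifs <;> simp_all <;> omega

lemma snd_foldl (v : List ℕ) : ∀ s : ℕ × ℕ,
    (v.foldl (bstep 1) s).2 = v.foldl qstep s.2 := by
  induction v with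
  | nil => intro s; rfl
  | cons a v ih => intro s; simp [List.foldl_cons, ih, snd_bstep]

lemma foldl_qstep_mono (v : List ℕ) : ∀ q q' : ℕ, q ≤ q' → q' ≤ q + 1 →
    v.foldl qstep q ≤ v.foldl qstep q' ∧ v.foldl qstep q' ≤ v.foldl qstep q + 1 := by
  induction v with
  | nil => intro q q' h1 h2; exact ⟨h1, h2⟩
  | cons a v ih =>
      intro q q' h1 h2
      simp only [List.foldl_cons]
      apply ih <;> unfold qstep <;> split_ifs <;> omega

/-- Let `w` be a word in the alphabet `{1,2}` and let `ŵ` be a word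
obtained from `w` by deleting one letter `i ∈ {1,2}`.  Then:
(1) `ε_1(ŵ) ≤ ε_1(w) + 1`, and if equality holds then `i = 1`;
(2) `ε_1(w) ≤ ε_1(ŵ) + 1`, and if equality holds then `i = 2`. -/
theorem delete_letter_eps (w what : List ℕ) (i : ℕ)
    (hw : ∀ a ∈ w, a = 1 ∨ a = 2) (hi : i = 1 ∨ i = 2)
    (hdel : ∃ u v, w = u ++ i :: v ∧ what = u ++ v) :
    (epsWord 1 what ≤ epsWord 1 w + 1 ∧ (epsWord 1 what = epsWord 1 w + 1 → i = 1)) ∧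
    (epsWord 1 w ≤ epsWord 1 what + 1 ∧ (epsWord 1 w = epsWord 1 what + 1 → i = 2)) := by
  obtain ⟨u, v, hwv, hhat⟩ := hdel
  subst hwv hhat
  have key : ∀ x : List ℕ, epsWord 1 x = x.foldl qstep 0 := by
    intro x; unfold epsWord; rw [snd_foldl]
  rw [key, key, List.foldl_append, List.foldl_append, List.foldl_cons]
  set q0 := u.foldl qstep 0 with hq0
  rcases hi with rfl | rfl
  · have h : qstep q0 1 = q0 - 1 := by unfold qstep; simp
    rw [h]
    have := foldl_qstep_mono v (q0 - 1) q0 (by omega) (by omega)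
    exact ⟨⟨by omega, fun _ => rfl⟩, ⟨by omega, fun h' => by omega⟩⟩
  · have h : qstep q0 2 = q0 + 1 := by unfold qstep; simp
    rw [h]
    have := foldl_qstep_mono v q0 (q0 + 1) (by omega) (by omega)
    exact ⟨⟨by omega, fun h' => by omega⟩, ⟨by omega, fun _ => rfl⟩⟩

end CrystalWords
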